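/- The natural extension of the Gauss map preserves the measure with density 1/(1+xy)²: the map T̄ on (0,1)² defined (for x irrational) by T̄(x,y) = (1/x − ⌊1/x⌋, 1/(⌊1/x⌋ + y)) is measure-preserving with respect to the Borel measure on (0,1)² with density (x,y) ↦ 1/(1+xy)² with respect to two-dimensional Lebesgue measure. -/

import Mathlib

open MeasureTheory

/-- The natural extension of the Gauss map on the unit square:
`T̄(x,y) = (1/x - ⌊1/x⌋, 1/(⌊1/x⌋ + y))`. -/
noncomputable def gaussNatExt : ℝ × ℝ → ℝ × ℝ :=
  fun p => (Int.fract (1 / p.1), 1 / ((⌊1 / p.1⌋ : ℝ) + p.2))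

/-- The measure on `(0,1)²` with density `(x,y) ↦ 1/(1+xy)²` with respect to
two-dimensional Lebesgue measure. -/
noncomputable def natExtMeasure : Measure (ℝ × ℝ) :=
  (volume.restrict ((Set.Ioo (0 : ℝ) 1) ×ˢ (Set.Ioo (0 : ℝ) 1))).withDensity
    fun p => ENNReal.ofReal (1 / (1 + p.1 * p.2) ^ 2)

section Aux
open Set

noncomputable def rho : ℝ × ℝ → ENNReal := fun p => ENNReal.ofReal (1 / (1 + p.1 * p.2) ^ 2)

noncomputable def Fm (n : ℕ) : ℝ × ℝ → ℝ × ℝ :=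
  fun p => (1 / p.1 - ((n : ℝ) + 1), 1 / (((n : ℝ) + 1) + p.2))

def Sn (n : ℕ) : Set (ℝ × ℝ) := Ioo ((n : ℝ) + 2)⁻¹ ((n : ℝ) + 1)⁻¹ ×ˢ Ioo (0 : ℝ) 1
def Tn (n : ℕ) : Set (ℝ × ℝ) := Ioo (0 : ℝ) 1 ×ˢ Ioo ((n : ℝ) + 2)⁻¹ ((n : ℝ) + 1)⁻¹

noncomputable def Dm (n : ℕ) (p : ℝ × ℝ) : ℝ × ℝ →L[ℝ] ℝ × ℝ :=
  (ContinuousLinearMap.smulRight (1 : ℝ →L[ℝ] ℝ) (-(p.1 ^ 2)⁻¹)).prodMap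
    (ContinuousLinearMap.smulRight (1 : ℝ →L[ℝ] ℝ) (-((((n : ℝ) + 1) + p.2) ^ 2)⁻¹))

lemma det_aux (a b : ℝ) :
    (((ContinuousLinearMap.smulRight (1 : ℝ →L[ℝ] ℝ) a).prodMap
      (ContinuousLinearMap.smulRight (1 : ℝ →L[ℝ] ℝ) b)).det) = a * b := by
  have : (((ContinuousLinearMap.smulRight (1 : ℝ →L[ℝ] ℝ) a).prodMap
      (ContinuousLinearMap.smulRight (1 : ℝ →L[ℝ] ℝ) b)) : ℝ × ℝ →ₗ[ℝ] ℝ × ℝ).det = a * b := by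
    rw [← LinearMap.det_toMatrix (Module.Basis.finTwoProd ℝ)]
    rw [Matrix.det_fin_two]
    simp [LinearMap.toMatrix_apply, Module.Basis.finTwoProd_zero, Module.Basis.finTwoProd_one,
      Module.Basis.coe_finTwoProd_repr]
  exact this

lemma mem_Sn_iff {n : ℕ} {p : ℝ × ℝ} :
    p ∈ Sn n ↔ (((n : ℝ) + 2)⁻¹ < p.1 ∧ p.1 < ((n : ℝ) + 1)⁻¹) ∧ (0 < p.2 ∧ p.2 < 1) := by
  simp [Sn, Set.mem_prod, Set.mem_Ioo]

lemma mem_Tn_iff {n : ℕ} {p : ℝ × ℝ} :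
    p ∈ Tn n ↔ (0 < p.1 ∧ p.1 < 1) ∧ (((n : ℝ) + 2)⁻¹ < p.2 ∧ p.2 < ((n : ℝ) + 1)⁻¹) := by
  simp [Tn, Set.mem_prod, Set.mem_Ioo]

-- basic bounds on the first coordinate
lemma oneDiv_bounds {n : ℕ} {x : ℝ} (h1 : ((n : ℝ) + 2)⁻¹ < x) (h2 : x < ((n : ℝ) + 1)⁻¹) :
    (n : ℝ) + 1 < 1 / x ∧ 1 / x < (n : ℝ) + 2 := by
  have hn2 : (0 : ℝ) < (n : ℝ) + 2 := by positivity
  have hn1 : (0 : ℝ) < (n : ℝ) + 1 := by positivity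
  have hx : 0 < x := lt_trans (by positivity) h1
  constructor
  · rw [lt_div_iff₀ hx]
    nlinarith [mul_lt_mul_of_pos_left h2 hn1, mul_inv_cancel₀ hn1.ne']
  · rw [div_lt_iff₀ hx]
    nlinarith [mul_lt_mul_of_pos_left h1 hn2, mul_inv_cancel₀ hn2.ne']

lemma floor_eq {n : ℕ} {x : ℝ} (h1 : ((n : ℝ) + 2)⁻¹ < x) (h2 : x < ((n : ℝ) + 1)⁻¹) :
    ⌊1 / x⌋ = (n : ℤ) + 1 := by
  obtain ⟨ha, hb⟩ := oneDiv_bounds h1 h2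
  rw [Int.floor_eq_iff]
  constructor <;> push_cast <;> [linarith; linarith]

lemma gauss_eq_Fm {n : ℕ} {p : ℝ × ℝ} (hp : p ∈ Sn n) : gaussNatExt p = Fm n p := by
  rw [mem_Sn_iff] at hp
  have hf := floor_eq hp.1.1 hp.1.2
  simp only [gaussNatExt, Fm, Int.fract, hf]
  push_cast
  ring_nf

lemma hasFDeriv_Fm {n : ℕ} {p : ℝ × ℝ} (hp : p ∈ Sn n) : HasFDerivAt (Fm n) (Dm n p) p := by
  rw [mem_Sn_iff] at hp
  have hx : p.1 ≠ 0 := (lt_trans (by positivity) hp.1.1).ne'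
  have hy : ((n : ℝ) + 1) + p.2 ≠ 0 := by nlinarith [hp.2.1, Nat.cast_nonneg (α := ℝ) n]
  have h1 : HasDerivAt (fun x : ℝ => 1 / x - ((n : ℝ) + 1)) (-(p.1 ^ 2)⁻¹) p.1 := by
    simpa [one_div] using (hasDerivAt_inv hx).sub_const ((n : ℝ) + 1)
  have h2 : HasDerivAt (fun y : ℝ => 1 / (((n : ℝ) + 1) + y))
      (-((((n : ℝ) + 1) + p.2) ^ 2)⁻¹) p.2 := by
    have hb : HasDerivAt (fun y : ℝ => ((n : ℝ) + 1) + y) 1 p.2 :=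
      (hasDerivAt_id p.2).const_add _
    simpa [one_div, neg_div, Pi.inv_def] using hb.inv hy
  exact h1.hasFDerivAt.prodMap p h2.hasFDerivAt

lemma injOn_Fm (n : ℕ) : Set.InjOn (Fm n) (Sn n) := by
  intro a ha b hb hab
  rw [mem_Sn_iff] at ha hb
  have hax : a.1 ≠ 0 := (lt_trans (by positivity) ha.1.1).ne'
  have hbx : b.1 ≠ 0 := (lt_trans (by positivity) hb.1.1).ne'
  have hnn : (0:ℝ) ≤ (n:ℝ) := Nat.cast_nonneg n
  have hay : ((n : ℝ) + 1) + a.2 ≠ 0 := by nlinarith [ha.2.1]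
  have hby : ((n : ℝ) + 1) + b.2 ≠ 0 := by nlinarith [hb.2.1]
  have h1 := congrArg Prod.fst hab
  have h2 := congrArg Prod.snd hab
  simp only [Fm] at h1 h2
  have e1 : a.1 = b.1 := by
    have : 1 / a.1 = 1 / b.1 := by linarith
    field_simp at this
    linarith
  have e2 : a.2 = b.2 := by
    have : ((n : ℝ) + 1) + a.2 = ((n : ℝ) + 1) + b.2 := by
      have := h2
      field_simp at this
      linarith
    linarith
  exact Prod.ext e1 e2

lemma image_Fm (n : ℕ) : Fm n '' Sn n = Tn n := by
  apply Set.Subset.antisymm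
  · rintro q ⟨p, hp, rfl⟩
    rw [mem_Sn_iff] at hp
    obtain ⟨⟨h1, h2⟩, h3, h4⟩ := hp
    have hx : 0 < p.1 := lt_trans (by positivity) h1
    obtain ⟨ha, hb⟩ := oneDiv_bounds h1 h2
    rw [mem_Tn_iff]
    have hnn : (0:ℝ) ≤ (n:ℝ) := Nat.cast_nonneg n
    refine ⟨⟨?_, ?_⟩, ?_, ?_⟩
    · simp only [Fm, one_div] at ha ⊢; linarith
    · simp only [Fm, one_div] at hb ⊢; linarith
    · simp only [Fm, one_div]
      rw [inv_lt_inv₀ (by linarith) (by linarith)]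
      linarith
    · simp only [Fm, one_div]
      rw [inv_lt_inv₀ (by linarith) (by linarith)]
      linarith
  · rintro q hq
    rw [mem_Tn_iff] at hq
    obtain ⟨⟨h1, h2⟩, h3, h4⟩ := hq
    have hv : 0 < q.2 := lt_trans (by positivity) h3
    refine ⟨((q.1 + ((n : ℝ) + 1))⁻¹, 1 / q.2 - ((n : ℝ) + 1)), ?_, ?_⟩
    · rw [mem_Sn_iff]
      have hb1 : (n : ℝ) + 1 < 1 / q.2 ∧ 1 / q.2 < (n : ℝ) + 2 := oneDiv_bounds h3 h4
      have hnn : (0:ℝ) ≤ (n:ℝ) := Nat.cast_nonneg n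
      refine ⟨⟨?_, ?_⟩, by simp only [one_div] at hb1 ⊢; linarith [hb1.1],
        by simp only [one_div] at hb1 ⊢; linarith [hb1.2]⟩
      · simp only
        rw [inv_lt_inv₀ (by linarith) (by linarith)]
        linarith
      · simp only
        rw [inv_lt_inv₀ (by linarith) (by linarith)]
        linarith
    · have hnn : (0:ℝ) ≤ (n:ℝ) := Nat.cast_nonneg n
      have hne : q.1 + ((n : ℝ) + 1) ≠ 0 := by nlinarith
      simp only [Fm, one_div, inv_inv]
      have : ((n : ℝ) + 1) + ((q.2)⁻¹ - ((n : ℝ) + 1)) = (q.2)⁻¹ := by ring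
      rw [this, inv_inv]
      exact Prod.ext (by ring) rfl

lemma det_rho {n : ℕ} {p : ℝ × ℝ} (hp : p ∈ Sn n) :
    ENNReal.ofReal |(Dm n p).det| * rho (Fm n p) = rho p := by
  rw [mem_Sn_iff] at hp
  obtain ⟨⟨h1, h2⟩, h3, h4⟩ := hp
  have hnn : (0:ℝ) ≤ (n:ℝ) := Nat.cast_nonneg n
  have hx : 0 < p.1 := lt_trans (by positivity) h1
  have hy : 0 < ((n : ℝ) + 1) + p.2 := by linarith
  have hxy : 0 < 1 + p.1 * p.2 := by nlinarith
  have hdet : (Dm n p).det = (-(p.1 ^ 2)⁻¹) * (-((((n : ℝ) + 1) + p.2) ^ 2)⁻¹) := det_aux _ _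
  have hpos : 0 < p.1 ^ 2 * (((n : ℝ) + 1) + p.2) ^ 2 := mul_pos (pow_pos hx 2) (pow_pos hy 2)
  have habs : |(Dm n p).det| = (p.1 ^ 2 * (((n : ℝ) + 1) + p.2) ^ 2)⁻¹ := by
    have he : (-(p.1 ^ 2)⁻¹) * (-((((n : ℝ) + 1) + p.2) ^ 2)⁻¹)
        = (p.1 ^ 2 * (((n : ℝ) + 1) + p.2) ^ 2)⁻¹ := by
      rw [mul_inv]; ring
    rw [hdet, he, abs_of_pos (inv_pos.mpr hpos)]
  have hkey : 1 + (1 / p.1 - ((n : ℝ) + 1)) * (1 / (((n : ℝ) + 1) + p.2))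
      = (1 + p.1 * p.2) / (p.1 * (((n : ℝ) + 1) + p.2)) := by
    field_simp
    ring
  simp only [rho, Fm, habs]
  have h0 : (0:ℝ) ≤ (p.1 ^ 2 * (((n : ℝ) + 1) + p.2) ^ 2)⁻¹ := by positivity
  rw [hkey, ← ENNReal.ofReal_mul h0]
  congr 1
  rw [div_pow, one_div ((1 + p.1 * p.2) ^ 2 / (p.1 * (((n : ℝ) + 1) + p.2)) ^ 2)]
  field_simp

lemma measurable_gaussNatExt : Measurable gaussNatExt := by
  refine Measurable.prod ?_ ?_
  · exact (measurable_const.div measurable_fst).fract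
  · refine measurable_const.div ?_
    exact (measurable_from_top.comp ((measurable_const.div measurable_fst).floor)).add
      measurable_snd

lemma key_n (n : ℕ) {s : Set (ℝ × ℝ)} (hs : MeasurableSet s) :
    ∫⁻ p in (gaussNatExt ⁻¹' s) ∩ Sn n, rho p = ∫⁻ p in s ∩ Tn n, rho p := by
  have hpre : MeasurableSet (gaussNatExt ⁻¹' s) := measurable_gaussNatExt hs
  have hS : MeasurableSet (Sn n) := measurableSet_Ioo.prod measurableSet_Ioo
  have hder : ∀ p ∈ Sn n, HasFDerivWithinAt (Fm n) (Dm n p) (Sn n) p :=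
    fun p hp => (hasFDeriv_Fm hp).hasFDerivWithinAt
  have hcov := lintegral_image_eq_lintegral_abs_det_fderiv_mul volume hS hder (injOn_Fm n)
    (s.indicator rho)
  rw [image_Fm] at hcov
  have hL : ∫⁻ x in Tn n, s.indicator rho x = ∫⁻ p in s ∩ Tn n, rho p := by
    rw [lintegral_indicator hs, Measure.restrict_restrict hs]
  have hR : ∫⁻ x in Sn n, ENNReal.ofReal |(Dm n x).det| * s.indicator rho (Fm n x)
      = ∫⁻ p in (gaussNatExt ⁻¹' s) ∩ Sn n, rho p := by
    have h2 : ∫⁻ p in (gaussNatExt ⁻¹' s) ∩ Sn n, rho p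
        = ∫⁻ x in Sn n, (gaussNatExt ⁻¹' s).indicator rho x := by
      rw [lintegral_indicator hpre, Measure.restrict_restrict hpre]
    rw [h2]
    refine setLIntegral_congr_fun hS (fun p hp => ?_)
    by_cases hmem : gaussNatExt p ∈ s
    · have hmem' : Fm n p ∈ s := by rwa [gauss_eq_Fm hp] at hmem
      rw [Set.indicator_of_mem hmem' rho,
        Set.indicator_of_mem (Set.mem_preimage.mpr hmem) rho, det_rho hp]
    · have hmem' : Fm n p ∉ s := by rwa [gauss_eq_Fm hp] at hmem
      rw [Set.indicator_of_notMem hmem' rho,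
        Set.indicator_of_notMem (fun h => hmem (Set.mem_preimage.mp h)) rho, mul_zero]
  rw [hL, hR] at hcov
  exact hcov.symm

lemma cover1d {x : ℝ} (hx : x ∈ Ioo (0:ℝ) 1)
    (h : ∀ n : ℕ, x ∉ Ioo ((n : ℝ) + 2)⁻¹ ((n : ℝ) + 1)⁻¹) : ∃ m : ℕ, x = ((m : ℝ))⁻¹ := by
  obtain ⟨hx0, hx1⟩ := hx
  have h1x : 1 < 1 / x := by rw [lt_div_iff₀ hx0]; linarith
  set k := ⌊1 / x⌋ with hkdef
  have hk1 : 1 ≤ k := Int.le_floor.mpr (by push_cast; linarith)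
  have hkpos : (0:ℝ) < (k : ℝ) := by exact_mod_cast Int.lt_of_lt_of_le zero_lt_one hk1
  have hfl : (k : ℝ) ≤ 1 / x := Int.floor_le _
  have hfl2 : 1 / x < (k : ℝ) + 1 := Int.lt_floor_add_one _
  have hxle : x ≤ ((k : ℝ))⁻¹ := by
    rw [← one_div, le_div_iff₀ hkpos]
    rw [le_div_iff₀ hx0] at hfl
    linarith
  have hgt : (((k : ℝ)) + 1)⁻¹ < x := by
    rw [← one_div, div_lt_iff₀ (by linarith)]
    rw [div_lt_iff₀ hx0] at hfl2
    linarith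
  rcases lt_or_eq_of_le hxle with hlt | heq
  · exfalso
    apply h (k - 1).toNat
    have hcast : (((k - 1).toNat : ℝ)) = (k : ℝ) - 1 := by
      have := Int.toNat_of_nonneg (by linarith : (0:ℤ) ≤ k - 1)
      exact_mod_cast congrArg (Int.cast : ℤ → ℝ) this
    constructor
    · rw [hcast]; convert hgt using 2; rfl; ring
    · rw [hcast]; convert hlt using 2; ring
  · refine ⟨k.toNat, ?_⟩
    rw [heq]
    congr 1
    exact_mod_cast (congrArg (Int.cast : ℤ → ℝ) (Int.toNat_of_nonneg (by linarith : (0:ℤ) ≤ k))).symm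

def Qset : Set (ℝ × ℝ) := Ioo (0:ℝ) 1 ×ˢ Ioo (0:ℝ) 1

lemma null_lines_horiz : volume (⋃ m : ℕ, ({((m : ℝ))⁻¹} : Set ℝ) ×ˢ (univ : Set ℝ)) = 0 := by
  refine measure_iUnion_null fun m => ?_
  rw [Measure.volume_eq_prod, Measure.prod_prod]
  simp

lemma null_lines_vert : volume (⋃ m : ℕ, (univ : Set ℝ) ×ˢ ({((m : ℝ))⁻¹} : Set ℝ)) = 0 := by
  refine measure_iUnion_null fun m => ?_
  rw [Measure.volume_eq_prod, Measure.prod_prod]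
  simp

lemma null_S : volume (Qset \ ⋃ n, Sn n) = 0 := by
  refine measure_mono_null ?_ null_lines_horiz
  rintro ⟨x, y⟩ ⟨⟨hx, hy⟩, hnot⟩
  obtain ⟨m, hm⟩ := cover1d hx (fun n hn => hnot (mem_iUnion.mpr ⟨n, ⟨hn, hy⟩⟩))
  exact mem_iUnion.mpr ⟨m, ⟨hm, trivial⟩⟩

lemma null_T : volume (Qset \ ⋃ n, Tn n) = 0 := by
  refine measure_mono_null ?_ null_lines_vert
  rintro ⟨x, y⟩ ⟨⟨hx, hy⟩, hnot⟩
  obtain ⟨m, hm⟩ := cover1d hy (fun n hn => hnot (mem_iUnion.mpr ⟨n, ⟨hx, hn⟩⟩))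
  exact mem_iUnion.mpr ⟨m, ⟨trivial, hm⟩⟩

lemma Ioo_pairwise_disjoint :
    Pairwise (Function.onFun Disjoint (fun n : ℕ => Ioo ((n : ℝ) + 2)⁻¹ ((n : ℝ) + 1)⁻¹)) := by
  have key : ∀ m n : ℕ, m < n →
      Disjoint (Ioo ((m : ℝ) + 2)⁻¹ ((m : ℝ) + 1)⁻¹) (Ioo ((n : ℝ) + 2)⁻¹ ((n : ℝ) + 1)⁻¹) := by
    intro m n hmn
    rw [Set.disjoint_left]
    rintro x ⟨hm1, hm2⟩ ⟨hn1, hn2⟩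
    have hcast : (m : ℝ) + 1 ≤ (n : ℝ) := by exact_mod_cast hmn
    have : ((n : ℝ) + 1)⁻¹ ≤ ((m : ℝ) + 2)⁻¹ := by
      rw [← one_div, ← one_div]
      exact one_div_le_one_div_of_le (by positivity) (by linarith)
    linarith
  intro m n hmn
  rcases hmn.lt_or_gt with h | h
  · exact key m n h
  · exact (key n m h).symm

lemma Sn_disjoint : Pairwise (Function.onFun Disjoint Sn) := by
  intro m n hmn
  refine Set.disjoint_left.mpr ?_
  rintro ⟨x, y⟩ ⟨hm, _⟩ ⟨hn, _⟩
  exact Set.disjoint_left.mp (Ioo_pairwise_disjoint hmn) hm hn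

lemma Tn_disjoint : Pairwise (Function.onFun Disjoint Tn) := by
  intro m n hmn
  refine Set.disjoint_left.mpr ?_
  rintro ⟨x, y⟩ ⟨_, hm⟩ ⟨_, hn⟩
  exact Set.disjoint_left.mp (Ioo_pairwise_disjoint hmn) hm hn

lemma Sn_subset (n : ℕ) : Sn n ⊆ Qset := by
  rintro ⟨x, y⟩ ⟨⟨h1, h2⟩, hy⟩
  have hnn : (0:ℝ) ≤ (n : ℝ) := Nat.cast_nonneg n
  refine ⟨⟨lt_trans (by positivity) h1, ?_⟩, hy⟩
  have : ((n : ℝ) + 1)⁻¹ ≤ 1 := by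
    rw [← one_div]
    rw [div_le_one (by linarith)]
    linarith
  exact lt_of_lt_of_le h2 this

lemma Tn_subset (n : ℕ) : Tn n ⊆ Qset := by
  rintro ⟨x, y⟩ ⟨hx, ⟨h1, h2⟩⟩
  have hnn : (0:ℝ) ≤ (n : ℝ) := Nat.cast_nonneg n
  refine ⟨hx, ⟨lt_trans (by positivity) h1, ?_⟩⟩
  have : ((n : ℝ) + 1)⁻¹ ≤ 1 := by
    rw [← one_div]
    rw [div_le_one (by linarith)]
    linarith
  exact lt_of_lt_of_le h2 this

lemma decompose (U : ℕ → Set (ℝ × ℝ)) (hU : ∀ n, MeasurableSet (U n))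
    (hdisj : Pairwise (Function.onFun Disjoint U)) (hsub : ∀ n, U n ⊆ Qset)
    (hnull : volume (Qset \ ⋃ n, U n) = 0) {A : Set (ℝ × ℝ)} (hA : MeasurableSet A) :
    ∫⁻ p in A ∩ Qset, rho p = ∑' n, ∫⁻ p in A ∩ U n, rho p := by
  have hsub2 : (⋃ n, A ∩ U n) ⊆ A ∩ Qset :=
    iUnion_subset fun n => inter_subset_inter_right A (hsub n)
  have h1 : (A ∩ Qset : Set (ℝ × ℝ)) =ᵐ[volume] ((⋃ n, A ∩ U n) : Set (ℝ × ℝ)) := by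
    rw [MeasureTheory.ae_eq_set]
    constructor
    · refine measure_mono_null ?_ hnull
      intro p hp
      obtain ⟨⟨hpA, hpQ⟩, hnot⟩ := hp
      refine Set.mem_diff_of_mem hpQ fun hmem => hnot ?_
      rw [mem_iUnion] at hmem ⊢
      obtain ⟨n, hpt⟩ := hmem
      exact ⟨n, hpA, hpt⟩
    · rw [Set.diff_eq_empty.mpr hsub2]
      exact measure_empty
  rw [setLIntegral_congr h1]
  exact lintegral_iUnion (fun n => hA.inter (hU n))
    (hdisj.mono fun {i j} h => h.mono inter_subset_right inter_subset_right) rho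

end Aux

open Set in
/-- The natural extension of the Gauss map preserves the measure with density
`1/(1+xy)²` on the unit square. -/
theorem gaussNatExt_measurePreserving :
    MeasurePreserving gaussNatExt natExtMeasure natExtMeasure := by
  refine ⟨measurable_gaussNatExt, ?_⟩
  have hmu : natExtMeasure = (volume.restrict Qset).withDensity rho := rfl
  ext s hs
  rw [Measure.map_apply measurable_gaussNatExt hs, hmu,
    withDensity_apply _ (measurable_gaussNatExt hs), withDensity_apply _ hs,
    Measure.restrict_restrict (measurable_gaussNatExt hs), Measure.restrict_restrict hs]
  rw [decompose Sn (fun n => measurableSet_Ioo.prod measurableSet_Ioo) Sn_disjoint Sn_subset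
      null_S (measurable_gaussNatExt hs),
    decompose Tn (fun n => measurableSet_Ioo.prod measurableSet_Ioo) Tn_disjoint Tn_subset
      null_T hs]
  exact tsum_congr fun n => key_n n hs
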